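/- For the dyadic-parabolic pseudo-distance on curvelet indices, there exist absolute constants c₁, c₂ > 0 such that for all curvelet indices μ, μ' one has c₁·ω(μ',μ) ≤ ω(μ,μ') ≤ c₂·ω(μ',μ); in particular c₁·d(μ',μ) ≤ d(μ,μ') ≤ c₂·d(μ',μ). -/

import Mathlib

noncomputable section

open MeasureTheory Real Set
open scoped ContDiff

/-- Rotation of the plane by the angle `θ`. -/
def rot2 (θ : ℝ) (p : ℝ × ℝ) : ℝ × ℝ :=
  (Real.cos θ * p.1 - Real.sin θ * p.2, Real.sin θ * p.1 + Real.cos θ * p.2)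

/-- Euclidean norm on `ℝ × ℝ`. -/
def enorm2 (p : ℝ × ℝ) : ℝ := Real.sqrt (p.1 ^ 2 + p.2 ^ 2)

/-- Euclidean inner product on `ℝ × ℝ`. -/
def dot2 (p q : ℝ × ℝ) : ℝ := p.1 * q.1 + p.2 * q.2

/-- The angle (argument) of a plane vector. -/
def argOf (p : ℝ × ℝ) : ℝ := Complex.arg ((p.1 : ℂ) + (p.2 : ℂ) * Complex.I)

/-- Distance between two angles, taken modulo `π`. -/
def angleDist (a b : ℝ) : ℝ := ⨅ n : ℤ, |a - b - (n : ℝ) * Real.pi|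

/-- A curvelet index `μ = (j, k, ℓ)`: scale `j`, position `k`, angular index `ℓ < 2^⌊j/2⌋`. -/
structure CurveletIndex where
  j : ℕ
  k : ℤ × ℤ
  l : ℕ
  hl : l < 2 ^ (j / 2)

namespace CurveletIndex

/-- The orientation angle `θ_μ = 2π ℓ 2^{-⌊j/2⌋}`. -/
def θ (μ : CurveletIndex) : ℝ := 2 * Real.pi * (μ.l : ℝ) * (2 : ℝ) ^ (-((μ.j / 2 : ℕ) : ℝ))

/-- The codirection `e_μ = (cos θ_μ, sin θ_μ)`. -/
def e (μ : CurveletIndex) : ℝ × ℝ := (Real.cos μ.θ, Real.sin μ.θ)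

/-- The spatial position `x_μ = R_{θ_μ}^{-1} (k₁ 2^{-j}, k₂ 2^{-j/2})`. -/
def pos (μ : CurveletIndex) : ℝ × ℝ :=
  rot2 (-μ.θ) ((μ.k.1 : ℝ) * (2 : ℝ) ^ (-(μ.j : ℝ)), (μ.k.2 : ℝ) * (2 : ℝ) ^ (-(μ.j : ℝ) / 2))

/-- The frequency center `ξ_μ = 2^j e_μ`. -/
def ξc (μ : CurveletIndex) : ℝ × ℝ :=
  ((2 : ℝ) ^ (μ.j : ℝ) * μ.e.1, (2 : ℝ) ^ (μ.j : ℝ) * μ.e.2)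

end CurveletIndex

/-- The pseudo-distance `d(μ, μ')`. -/
def dpar (μ μ' : CurveletIndex) : ℝ :=
  angleDist μ.θ μ'.θ ^ 2 + ((μ.pos.1 - μ'.pos.1) ^ 2 + (μ.pos.2 - μ'.pos.2) ^ 2) +
    |dot2 μ.e (μ.pos.1 - μ'.pos.1, μ.pos.2 - μ'.pos.2)|

/-- The dyadic-parabolic pseudo-distance `ω(μ, μ')`. -/
def om (μ μ' : CurveletIndex) : ℝ :=
  (2 : ℝ) ^ |(μ.j : ℝ) - (μ'.j : ℝ)| *
    (1 + min ((2 : ℝ) ^ (μ.j : ℝ)) ((2 : ℝ) ^ (μ'.j : ℝ)) * dpar μ μ')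

section Aux

lemma angleDist_bdd (a b : ℝ) : BddBelow (Set.range fun n : ℤ => |a - b - (n : ℝ) * Real.pi|) :=
  ⟨0, by rintro x ⟨n, rfl⟩; exact abs_nonneg _⟩

lemma angleDist_nonneg (a b : ℝ) : 0 ≤ angleDist a b :=
  le_ciInf fun n => abs_nonneg _

lemma angleDist_symm (a b : ℝ) : angleDist a b = angleDist b a := by
  have key : ∀ x y : ℝ, angleDist x y ≤ angleDist y x := by
    intro x y
    refine le_ciInf fun n => ?_
    have h := ciInf_le (angleDist_bdd x y) (-n)
    calc angleDist x y ≤ |x - y - ((-n : ℤ) : ℝ) * Real.pi| := h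
      _ = |y - x - (n : ℝ) * Real.pi| := by push_cast; rw [← abs_neg]; ring_nf
  exact le_antisymm (key a b) (key b a)

lemma abs_dot_le (p₁ p₂ q₁ q₂ : ℝ) :
    |p₁ * q₁ + p₂ * q₂| ≤ Real.sqrt (p₁ ^ 2 + p₂ ^ 2) * Real.sqrt (q₁ ^ 2 + q₂ ^ 2) := by
  rw [← Real.sqrt_mul_self (abs_nonneg (p₁ * q₁ + p₂ * q₂)), ← Real.sqrt_mul (by positivity)]
  apply Real.sqrt_le_sqrt
  have h := sq_nonneg (p₁ * q₂ - p₂ * q₁)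
  have : |p₁ * q₁ + p₂ * q₂| * |p₁ * q₁ + p₂ * q₂| = (p₁ * q₁ + p₂ * q₂) ^ 2 := by
    rw [← abs_mul, abs_mul_self]; ring
  rw [this]; nlinarith

lemma chord_le (a b : ℝ) :
    Real.sqrt ((Real.cos a - Real.cos b) ^ 2 + (Real.sin a - Real.sin b) ^ 2) ≤ |a - b| := by
  rw [← Real.sqrt_sq_eq_abs]
  apply Real.sqrt_le_sqrt
  have h1 : (Real.cos a - Real.cos b) ^ 2 + (Real.sin a - Real.sin b) ^ 2
      = 2 - 2 * Real.cos (a - b) := by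
    rw [Real.cos_sub]
    nlinarith [Real.sin_sq_add_cos_sq a, Real.sin_sq_add_cos_sq b]
  have h2 : Real.sin ((a - b) / 2) ^ 2 = (1 - Real.cos (a - b)) / 2 := by
    have habs := Real.abs_sin_half (a - b)
    have hnn : 0 ≤ (1 - Real.cos (a - b)) / 2 := by nlinarith [Real.cos_le_one (a - b)]
    calc Real.sin ((a - b) / 2) ^ 2 = |Real.sin ((a - b) / 2)| ^ 2 := (sq_abs _).symm
      _ = (1 - Real.cos (a - b)) / 2 := by rw [habs, Real.sq_sqrt hnn]
  have h3 : |Real.sin ((a - b) / 2)| ≤ |(a - b) / 2| := Real.abs_sin_le_abs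
  have h4 : Real.sin ((a - b) / 2) ^ 2 ≤ ((a - b) / 2) ^ 2 := by
    rw [← sq_abs, ← sq_abs ((a - b) / 2)]
    exact pow_le_pow_left₀ (abs_nonneg _) h3 2
  nlinarith

/-- per-integer estimate -/
lemma dot_est (a b u v : ℝ) (n : ℤ) :
    |Real.cos a * u + Real.sin a * v| ≤ |Real.cos b * u + Real.sin b * v| +
      |a - b - (n : ℝ) * Real.pi| * Real.sqrt (u ^ 2 + v ^ 2) := by
  set c := b + (n : ℝ) * Real.pi with hc
  have hsin : Real.sin c = Real.cos ((n : ℝ) * Real.pi) * Real.sin b := by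
    rw [hc, Real.sin_add, Real.sin_int_mul_pi]; ring
  have hcos : Real.cos c = Real.cos ((n : ℝ) * Real.pi) * Real.cos b := by
    rw [hc, Real.cos_add, Real.sin_int_mul_pi]; ring
  have habs : |Real.cos ((n : ℝ) * Real.pi)| = 1 := Real.abs_cos_int_mul_pi n
  have h1 : |Real.cos c * u + Real.sin c * v| = |Real.cos b * u + Real.sin b * v| := by
    rw [hsin, hcos]
    have : Real.cos ((n : ℝ) * Real.pi) * Real.cos b * u
        + Real.cos ((n : ℝ) * Real.pi) * Real.sin b * v
        = Real.cos ((n : ℝ) * Real.pi) * (Real.cos b * u + Real.sin b * v) := by ring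
    rw [this, abs_mul, habs, one_mul]
  have h2 : |Real.cos a * u + Real.sin a * v - (Real.cos c * u + Real.sin c * v)|
      ≤ |a - c| * Real.sqrt (u ^ 2 + v ^ 2) := by
    have : Real.cos a * u + Real.sin a * v - (Real.cos c * u + Real.sin c * v)
        = (Real.cos a - Real.cos c) * u + (Real.sin a - Real.sin c) * v := by ring
    rw [this]
    calc |(Real.cos a - Real.cos c) * u + (Real.sin a - Real.sin c) * v|
        ≤ Real.sqrt ((Real.cos a - Real.cos c) ^ 2 + (Real.sin a - Real.sin c) ^ 2) *
          Real.sqrt (u ^ 2 + v ^ 2) := abs_dot_le _ _ _ _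
      _ ≤ |a - c| * Real.sqrt (u ^ 2 + v ^ 2) := by
          exact mul_le_mul_of_nonneg_right (chord_le a c) (Real.sqrt_nonneg _)
  have h3 : a - c = a - b - (n : ℝ) * Real.pi := by rw [hc]; ring
  calc |Real.cos a * u + Real.sin a * v|
      ≤ |Real.cos c * u + Real.sin c * v|
        + |Real.cos a * u + Real.sin a * v - (Real.cos c * u + Real.sin c * v)| := by
        have := abs_add_le (Real.cos c * u + Real.sin c * v)
          (Real.cos a * u + Real.sin a * v - (Real.cos c * u + Real.sin c * v))
        simpa using this
    _ ≤ |Real.cos b * u + Real.sin b * v| + |a - b - (n : ℝ) * Real.pi|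
        * Real.sqrt (u ^ 2 + v ^ 2) := by rw [h1, ← h3]; exact add_le_add le_rfl h2

lemma dot_est' (a b u v : ℝ) :
    |Real.cos a * u + Real.sin a * v| ≤ |Real.cos b * u + Real.sin b * v| +
      angleDist a b * Real.sqrt (u ^ 2 + v ^ 2) := by
  set N := Real.sqrt (u ^ 2 + v ^ 2) with hN
  rcases eq_or_lt_of_le (Real.sqrt_nonneg (u ^ 2 + v ^ 2)) with h0 | h0
  · have hu : u = 0 ∧ v = 0 := by
      have := Real.sqrt_eq_zero' .. |>.mp h0.symm
      constructor <;> nlinarith [sq_nonneg u, sq_nonneg v]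
    simp only [hu.1, hu.2]
    simp only [mul_zero, add_zero, abs_zero]
    have : (0:ℝ) ≤ angleDist a b * N := mul_nonneg (angleDist_nonneg a b) (hN ▸ Real.sqrt_nonneg _)
    linarith [abs_nonneg (Real.cos b * (0:ℝ) + Real.sin b * 0)]
  · have key : (|Real.cos a * u + Real.sin a * v| - |Real.cos b * u + Real.sin b * v|) / N
        ≤ angleDist a b := by
      refine le_ciInf fun n => ?_
      rw [div_le_iff₀ h0]
      have := dot_est a b u v n
      linarith
    rw [div_le_iff₀ h0] at key
    linarith

lemma amgm_sqrt (A B : ℝ) (hA : 0 ≤ A) (hB : 0 ≤ B) : A * Real.sqrt B ≤ (A ^ 2 + B) / 2 := by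
  nlinarith [sq_nonneg (A - Real.sqrt B), Real.sq_sqrt hB]

lemma dpar_le (μ μ' : CurveletIndex) : dpar μ μ' ≤ 3 / 2 * dpar μ' μ := by
  unfold dpar dot2 CurveletIndex.e
  set u := μ.pos.1 - μ'.pos.1 with hu
  set v := μ.pos.2 - μ'.pos.2 with hv
  set A := angleDist μ.θ μ'.θ with hA
  have hAsymm : angleDist μ'.θ μ.θ = A := (angleDist_symm μ.θ μ'.θ).symm
  have hu' : μ'.pos.1 - μ.pos.1 = -u := by rw [hu]; ring
  have hv' : μ'.pos.2 - μ.pos.2 = -v := by rw [hv]; ring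
  rw [hAsymm, hu', hv']
  simp only
  have hflip : |Real.cos μ'.θ * (-u) + Real.sin μ'.θ * (-v)|
      = |Real.cos μ'.θ * u + Real.sin μ'.θ * v| := by
    rw [← abs_neg]; ring_nf
  rw [hflip]
  have hsq : (-u) ^ 2 + (-v) ^ 2 = u ^ 2 + v ^ 2 := by ring
  rw [hsq]
  have hANN : 0 ≤ A := angleDist_nonneg _ _
  have hest := dot_est' μ.θ μ'.θ u v
  rw [← hA] at hest
  have hS : Real.sqrt (u ^ 2 + v ^ 2) ^ 2 = u ^ 2 + v ^ 2 :=
    Real.sq_sqrt (by positivity)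
  have hamgm : A * Real.sqrt (u ^ 2 + v ^ 2) ≤ (A ^ 2 + (u ^ 2 + v ^ 2)) / 2 :=
    amgm_sqrt A (u ^ 2 + v ^ 2) hANN (by positivity)
  have hd0 : 0 ≤ |Real.cos μ'.θ * u + Real.sin μ'.θ * v| := abs_nonneg _
  linarith

end Aux


/-- the dyadic-parabolic pseudo-distance `ω` (and `d`) is symmetric up to
absolute multiplicative constants. -/
theorem omega_symm :
    ∃ c₁ c₂ : ℝ, 0 < c₁ ∧ 0 < c₂ ∧
      ∀ μ μ' : CurveletIndex,
        (c₁ * om μ' μ ≤ om μ μ' ∧ om μ μ' ≤ c₂ * om μ' μ) ∧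
        (c₁ * dpar μ' μ ≤ dpar μ μ' ∧ dpar μ μ' ≤ c₂ * dpar μ' μ) := by
  refine ⟨2 / 3, 3 / 2, by norm_num, by norm_num, fun μ μ' => ?_⟩
  have hd1 : dpar μ μ' ≤ 3 / 2 * dpar μ' μ := dpar_le μ μ'
  have hd2 : dpar μ' μ ≤ 3 / 2 * dpar μ μ' := dpar_le μ' μ
  have key : ∀ ν ν' : CurveletIndex, dpar ν ν' ≤ 3 / 2 * dpar ν' ν →
      om ν ν' ≤ 3 / 2 * om ν' ν := by
    intro ν ν' hd
    unfold om
    rw [abs_sub_comm ((ν'.j : ℝ)), min_comm ((2 : ℝ) ^ (ν'.j : ℝ))]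
    set P := (2 : ℝ) ^ |(ν.j : ℝ) - (ν'.j : ℝ)| with hP
    set m := min ((2 : ℝ) ^ (ν.j : ℝ)) ((2 : ℝ) ^ (ν'.j : ℝ)) with hm
    have hP0 : 0 < P := by rw [hP]; positivity
    have hm0 : 0 ≤ m := le_min (by positivity) (by positivity)
    have h1 : m * dpar ν ν' ≤ m * (3 / 2 * dpar ν' ν) :=
      mul_le_mul_of_nonneg_left hd hm0
    have h2 : 1 + m * dpar ν ν' ≤ 3 / 2 * (1 + m * dpar ν' ν) := by linarith
    calc P * (1 + m * dpar ν ν') ≤ P * (3 / 2 * (1 + m * dpar ν' ν)) :=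
          mul_le_mul_of_nonneg_left h2 hP0.le
      _ = 3 / 2 * (P * (1 + m * dpar ν' ν)) := by ring
  have ho1 : om μ μ' ≤ 3 / 2 * om μ' μ := key μ μ' hd1
  have ho2 : om μ' μ ≤ 3 / 2 * om μ μ' := key μ' μ hd2
  exact ⟨⟨by linarith, ho1⟩, ⟨by linarith, hd1⟩⟩
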